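/- Let m ∈ ℝ, m ≠ 0, and let f, 𝔣 : Γ₊ → ℝ be symmetric, differentiable, positively homogeneous of degree m, and elliptic on Γ₊ (all first partial derivatives of both f and 𝔣 are positive on Γ₊). If f is concave and 𝔣 is convex on Γ₊, then for every λ ∈ Γ₊: m · ( 𝔣(λ) · Σᵢ ∂f/∂λᵢ(λ) · λᵢ² − f(λ) · Σᵢ ∂𝔣/∂λᵢ(λ) · λᵢ² ) ≤ 0. -/

import Mathlib

open Finset

/-- Tangent line lies above the graph for a concave function. -/
lemma concave_tangent_aux {E : Type*} [NormedAddCommGroup E] [NormedSpace ℝ E]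
    {S : Set E} {f : E → ℝ} (hf : ConcaveOn ℝ S f) {x y : E}
    (hx : x ∈ S) (hy : y ∈ S) (hd : DifferentiableAt ℝ f x) :
    f y - f x ≤ fderiv ℝ f x (y - x) := by
  have hφ : ConcaveOn ℝ ((AffineMap.lineMap x y : ℝ →ᵃ[ℝ] E) ⁻¹' S)
      (f ∘ (AffineMap.lineMap x y : ℝ →ᵃ[ℝ] E)) := hf.comp_affineMap _
  have h0 : (0 : ℝ) ∈ (AffineMap.lineMap x y : ℝ →ᵃ[ℝ] E) ⁻¹' S := by
    simp [Set.mem_preimage, hx]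
  have h1 : (1 : ℝ) ∈ (AffineMap.lineMap x y : ℝ →ᵃ[ℝ] E) ⁻¹' S := by
    simp [Set.mem_preimage, hy]
  have hder : HasDerivAt (f ∘ (AffineMap.lineMap x y : ℝ →ᵃ[ℝ] E))
      (fderiv ℝ f x (y - x)) 0 := by
    have hl : HasDerivAt (AffineMap.lineMap x y : ℝ →ᵃ[ℝ] E) (y - x) 0 :=
      AffineMap.hasDerivAt_lineMap
    have hfd : HasFDerivAt f (fderiv ℝ f x) ((AffineMap.lineMap x y : ℝ →ᵃ[ℝ] E) 0) := by
      simpa using hd.hasFDerivAt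
    exact hfd.comp_hasDerivAt 0 hl
  have := hφ.slope_le_of_hasDerivAt h0 h1 one_pos hder
  simpa [slope, Function.comp] using this

/-- Euler's identity for positively homogeneous functions. -/
lemma euler_aux {n : ℕ} {m : ℝ} {f : (Fin n → ℝ) → ℝ} {Γ : Set (Fin n → ℝ)}
    {x : Fin n → ℝ} (hx : x ∈ Γ) (hd : DifferentiableAt ℝ f x)
    (hhom : ∀ t : ℝ, 0 < t → ∀ x ∈ Γ, f (t • x) = t ^ m * f x) :
    ∑ i, fderiv ℝ f x (Pi.single i 1) * x i = m * f x := by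
  have hc : HasDerivAt (fun t : ℝ => t • x) x 1 := by
    simpa using (hasDerivAt_id (1 : ℝ)).smul_const x
  have h1 : HasDerivAt (fun t : ℝ => f (t • x)) (fderiv ℝ f x x) 1 := by
    have hfd : HasFDerivAt f (fderiv ℝ f x) ((1 : ℝ) • x) := by
      simpa using hd.hasFDerivAt
    exact hfd.comp_hasDerivAt 1 hc
  have h2 : HasDerivAt (fun t : ℝ => t ^ m * f x) (m * f x) 1 := by
    have := (Real.hasDerivAt_rpow_const (x := 1) (p := m) (Or.inl one_ne_zero)).mul_const (f x)
    simpa [Real.one_rpow] using this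
  have heq : (fun t : ℝ => f (t • x)) =ᶠ[nhds 1] fun t : ℝ => t ^ m * f x := by
    filter_upwards [eventually_gt_nhds one_pos] with t ht
    exact hhom t ht x hx
  have h1' : HasDerivAt (fun t : ℝ => t ^ m * f x) (fderiv ℝ f x x) 1 :=
    h1.congr_of_eventuallyEq heq.symm
  have hkey : fderiv ℝ f x x = m * f x := h1'.unique h2
  have hxsum : (∑ i, x i • (Pi.single i (1 : ℝ) : Fin n → ℝ)) = x := by
    have : (∑ i, (Pi.single i (x i) : Fin n → ℝ)) = x := Finset.univ_sum_single x
    simpa [← Pi.single_smul, smul_eq_mul] using this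
  calc ∑ i, fderiv ℝ f x (Pi.single i 1) * x i
      = fderiv ℝ f x (∑ i, x i • (Pi.single i (1 : ℝ) : Fin n → ℝ)) := by
        rw [map_sum]
        exact Finset.sum_congr rfl fun i _ => by
          rw [(fderiv ℝ f x).map_smul, smul_eq_mul, mul_comm]
    _ = fderiv ℝ f x x := by rw [hxsum]
    _ = m * f x := hkey

/-- Symmetrization inequality for double sums. -/
lemma double_sum_aux {n : ℕ} (F x : Fin n → ℝ) (hx : ∀ i, 0 < x i)
    (h : ∀ i j, (x i - x j) * (F i - F j) ≤ 0) :
    (∑ i, F i * x i ^ 2) * (∑ j, x j) ≤ (∑ i, F i * x i) * (∑ j, x j ^ 2) := by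
  have key : ∑ i, ∑ j, (F i - F j) * (x i * x j * (x i - x j)) ≤ 0 :=
    Finset.sum_nonpos fun i _ => Finset.sum_nonpos fun j _ => by
      nlinarith [h i j, mul_pos (hx i) (hx j)]
  have s1 : ∑ i, ∑ j, (F i * x i ^ 2 * x j - F i * x i * x j ^ 2)
      = (∑ i, F i * x i ^ 2) * (∑ j, x j) - (∑ i, F i * x i) * (∑ j, x j ^ 2) := by
    rw [Finset.sum_mul_sum, Finset.sum_mul_sum, ← Finset.sum_sub_distrib]
    exact Finset.sum_congr rfl fun i _ => by rw [Finset.sum_sub_distrib]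
  have e : ∑ i, ∑ j, (F i - F j) * (x i * x j * (x i - x j))
      = (∑ i, ∑ j, (F i * x i ^ 2 * x j - F i * x i * x j ^ 2))
      + (∑ i, ∑ j, (F j * x j ^ 2 * x i - F j * x j * x i ^ 2)) := by
    rw [← Finset.sum_add_distrib]
    refine Finset.sum_congr rfl fun i _ => ?_
    rw [← Finset.sum_add_distrib]
    exact Finset.sum_congr rfl fun j _ => by ring
  have e2 : (∑ i, ∑ j, (F j * x j ^ 2 * x i - F j * x j * x i ^ 2))
      = ∑ i, ∑ j, (F i * x i ^ 2 * x j - F i * x i * x j ^ 2) :=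
    Finset.sum_comm
  rw [e, e2, s1] at key
  linarith

/-- Key monotonicity of the gradient of a symmetric concave function. -/
lemma grad_mono_aux {n : ℕ} {f : (Fin n → ℝ) → ℝ} {Γ : Set (Fin n → ℝ)}
    (hΓ : Γ = {x : Fin n → ℝ | ∀ i, 0 < x i})
    (hsym : ∀ (σ : Equiv.Perm (Fin n)), ∀ x ∈ Γ, f (x ∘ σ) = f x)
    (hconc : ConcaveOn ℝ Γ f) {x : Fin n → ℝ} (hx : x ∈ Γ)
    (hd : DifferentiableAt ℝ f x) (i j : Fin n) :
    (x i - x j) * (fderiv ℝ f x (Pi.single i 1) - fderiv ℝ f x (Pi.single j 1)) ≤ 0 := by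
  rcases eq_or_ne i j with rfl | hij
  · simp
  set y : Fin n → ℝ := x ∘ (Equiv.swap i j) with hy
  have hyΓ : y ∈ Γ := by
    rw [hΓ] at hx ⊢
    intro k
    exact hx _
  have hfy : f y = f x := hsym (Equiv.swap i j) x hx
  have htan : f y - f x ≤ fderiv ℝ f x (y - x) := concave_tangent_aux hconc hx hyΓ hd
  have hyx : y - x = Pi.single i (x j - x i) + Pi.single j (x i - x j) := by
    funext k
    rcases eq_or_ne k i with rfl | hki
    · simp [hy, Equiv.swap_apply_left, Pi.single_apply, hij, Ne.symm hij]
    · rcases eq_or_ne k j with rfl | hkj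
      · simp [hy, Equiv.swap_apply_right, Pi.single_apply, hij, Ne.symm hij]
      · simp [hy, Equiv.swap_apply_of_ne_of_ne hki hkj, Pi.single_apply, hki, hkj]
  have hsingle : ∀ (k : Fin n) (c : ℝ),
      fderiv ℝ f x (Pi.single k c) = c * fderiv ℝ f x (Pi.single k 1) := by
    intro k c
    have hc : (Pi.single k c : Fin n → ℝ) = c • (Pi.single k (1 : ℝ) : Fin n → ℝ) := by
      funext l
      by_cases h : l = k <;> simp [Pi.single_apply, h]
    rw [hc, (fderiv ℝ f x).map_smul, smul_eq_mul]
  have hval : fderiv ℝ f x (y - x)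
      = (x j - x i) * fderiv ℝ f x (Pi.single i 1)
      + (x i - x j) * fderiv ℝ f x (Pi.single j 1) := by
    rw [hyx, (fderiv ℝ f x).map_add, hsingle i (x j - x i), hsingle j (x i - x j)]
  rw [hfy] at htan
  rw [hval] at htan
  nlinarith

/-- first inequality of Lemma 2.3, concave/convex case. -/
theorem lemma23_first_ineq_concave_convex (n : ℕ) (m : ℝ) (hm : m ≠ 0)
    (f g : (Fin n → ℝ) → ℝ)
    (Γ : Set (Fin n → ℝ)) (hΓ : Γ = {x : Fin n → ℝ | ∀ i, 0 < x i})
    (hsymf : ∀ (σ : Equiv.Perm (Fin n)), ∀ x ∈ Γ, f (x ∘ σ) = f x)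
    (hsymg : ∀ (σ : Equiv.Perm (Fin n)), ∀ x ∈ Γ, g (x ∘ σ) = g x)
    (hdf : ∀ x ∈ Γ, DifferentiableAt ℝ f x)
    (hdg : ∀ x ∈ Γ, DifferentiableAt ℝ g x)
    (hhomf : ∀ t : ℝ, 0 < t → ∀ x ∈ Γ, f (t • x) = t ^ m * f x)
    (hhomg : ∀ t : ℝ, 0 < t → ∀ x ∈ Γ, g (t • x) = t ^ m * g x)
    (hellf : ∀ x ∈ Γ, ∀ i, 0 < fderiv ℝ f x (Pi.single i 1))
    (hellg : ∀ x ∈ Γ, ∀ i, 0 < fderiv ℝ g x (Pi.single i 1))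
    (hconcf : ConcaveOn ℝ Γ f) (hconvg : ConvexOn ℝ Γ g) :
    ∀ x ∈ Γ,
      m * (g x * ∑ i, fderiv ℝ f x (Pi.single i 1) * (x i) ^ 2
         - f x * ∑ i, fderiv ℝ g x (Pi.single i 1) * (x i) ^ 2) ≤ 0 := by
  intro x hx
  rcases Nat.eq_zero_or_pos n with hn | hn
  · subst hn
    simp
  have hxpos : ∀ i, 0 < x i := by rw [hΓ] at hx; exact hx
  set F : Fin n → ℝ := fun i => fderiv ℝ f x (Pi.single i 1) with hF
  set G : Fin n → ℝ := fun i => fderiv ℝ g x (Pi.single i 1) with hG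
  -- Euler identities
  have hef : ∑ i, F i * x i = m * f x := euler_aux hx (hdf x hx) hhomf
  have heg : ∑ i, G i * x i = m * g x := euler_aux hx (hdg x hx) hhomg
  -- positivity
  obtain ⟨i0⟩ : Nonempty (Fin n) := Fin.pos_iff_nonempty.mp hn
  have hmf : 0 < m * f x := by
    rw [← hef]
    refine Finset.sum_pos (fun i _ => mul_pos (hellf x hx i) (hxpos i)) ⟨i0, Finset.mem_univ i0⟩
  have hmg : 0 < m * g x := by
    rw [← heg]
    refine Finset.sum_pos (fun i _ => mul_pos (hellg x hx i) (hxpos i)) ⟨i0, Finset.mem_univ i0⟩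
  have hS : 0 < ∑ j, x j :=
    Finset.sum_pos (fun j _ => hxpos j) ⟨i0, Finset.mem_univ i0⟩
  -- gradient monotonicity
  have hFmono : ∀ i j, (x i - x j) * (F i - F j) ≤ 0 := fun i j =>
    grad_mono_aux hΓ hsymf hconcf hx (hdf x hx) i j
  have hGmono : ∀ i j, (x i - x j) * (-G i - -G j) ≤ 0 := by
    intro i j
    have := grad_mono_aux hΓ (f := fun x => -g x)
      (fun σ x hx => by simp [hsymg σ x hx]) hconvg.neg hx (hdg x hx).neg i j
    have hneg : ∀ k : Fin n, fderiv ℝ (fun x => -g x) x (Pi.single k 1) = -(G k) := by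
      intro k
      rw [fderiv_fun_neg]
      simp [hG]
    rw [hneg, hneg] at this
    exact this
  -- key inequalities
  have h1 : (∑ i, F i * x i ^ 2) * (∑ j, x j) ≤ (m * f x) * (∑ j, x j ^ 2) := by
    rw [← hef]; exact double_sum_aux F x hxpos hFmono
  have h2 : (m * g x) * (∑ j, x j ^ 2) ≤ (∑ i, G i * x i ^ 2) * (∑ j, x j) := by
    rw [← heg]
    have := double_sum_aux (fun i => -(G i)) x hxpos
      (fun i j => by simpa using hGmono i j)
    simp only [neg_mul, Finset.sum_neg_distrib] at this
    linarith
  -- combine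
  have hAf : 0 ≤ ∑ i, F i * x i ^ 2 :=
    Finset.sum_nonneg fun i _ => le_of_lt (mul_pos (hellf x hx i) (pow_pos (hxpos i) 2))
  have hAg : 0 ≤ ∑ i, G i * x i ^ 2 :=
    Finset.sum_nonneg fun i _ => le_of_lt (mul_pos (hellg x hx i) (pow_pos (hxpos i) 2))
  have hmain : (m * g x) * (∑ i, F i * x i ^ 2) ≤ (m * f x) * (∑ i, G i * x i ^ 2) := by
    have c1 : (m * g x) * ((∑ i, F i * x i ^ 2) * (∑ j, x j))
        ≤ (m * g x) * ((m * f x) * (∑ j, x j ^ 2)) :=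
      mul_le_mul_of_nonneg_left h1 (le_of_lt hmg)
    have c2 : (m * f x) * ((m * g x) * (∑ j, x j ^ 2))
        ≤ (m * f x) * ((∑ i, G i * x i ^ 2) * (∑ j, x j)) :=
      mul_le_mul_of_nonneg_left h2 (le_of_lt hmf)
    have : (m * g x) * (∑ i, F i * x i ^ 2) * (∑ j, x j)
        ≤ (m * f x) * (∑ i, G i * x i ^ 2) * (∑ j, x j) := by nlinarith [c1, c2]
    exact le_of_mul_le_mul_right this hS
  nlinarith [hmain]
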